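/- arXiv:2011.07919 — 3 statements merged into one kernel-verified Lean document; each statement's English description precedes it below -/
import Mathlib

section
/- Céa's lemma: under the hypotheses of Lax–Milgram with continuity constant M and coercivity constant α, the Galerkin solution uₕ ∈ Vₕ satisfies ‖u − uₕ‖ ≤ (M/α) · inf over vₕ ∈ Vₕ of ‖u − vₕ‖. -/
/-- Céa's lemma: under the Lax–Milgram hypotheses with continuity constant `M`
and coercivity constant `α`, the Galerkin solution `uₕ ∈ Vₕ` satisfies
`‖u - uₕ‖ ≤ (M/α) ⨅ vₕ ∈ Vₕ, ‖u - vₕ‖`. -/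
theorem cea_lemma (V : Type*) [NormedAddCommGroup V] [InnerProductSpace ℝ V]
    [CompleteSpace V]
    (a : V →ₗ[ℝ] V →ₗ[ℝ] ℝ)
    (M α : ℝ) (hα : 0 < α)
    (hbdd : ∀ w v : V, |a w v| ≤ M * ‖w‖ * ‖v‖)
    (hcoercive : ∀ v : V, α * ‖v‖ ^ 2 ≤ a v v)
    (L : V →ₗ[ℝ] ℝ)
    (Vh : Submodule ℝ V) (u uh : V)
    (hu : ∀ v : V, a u v = L v)
    (huh : uh ∈ Vh)
    (hgal : ∀ vh ∈ Vh, a uh vh = L vh) :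
    ‖u - uh‖ ≤ (M / α) * ⨅ vh : Vh, ‖u - (vh : V)‖ := by
  have hbdd0 : BddBelow (Set.range fun vh : Vh => ‖u - (vh : V)‖) :=
    ⟨0, by rintro x ⟨vh, rfl⟩; exact norm_nonneg _⟩
  by_cases hue : u = uh
  · subst hue
    have h1 : (⨅ vh : Vh, ‖u - (vh : V)‖) ≤ 0 := by
      have := ciInf_le hbdd0 (⟨u, huh⟩ : Vh)
      simpa using this
    have h2 : (0 : ℝ) ≤ ⨅ vh : Vh, ‖u - (vh : V)‖ :=
      le_ciInf fun vh => norm_nonneg _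
    have : (⨅ vh : Vh, ‖u - (vh : V)‖) = 0 := le_antisymm h1 h2
    simp [this]
  · -- M > 0 from coercivity and boundedness at u - uh ≠ 0
    have hne : u - uh ≠ 0 := sub_ne_zero.mpr hue
    have hnorm : 0 < ‖u - uh‖ := norm_pos_iff.mpr hne
    have hM : 0 < M := by
      have h1 := hcoercive (u - uh)
      have h2 := hbdd (u - uh) (u - uh)
      have h3 : α * ‖u - uh‖ ^ 2 ≤ M * ‖u - uh‖ * ‖u - uh‖ :=
        h1.trans ((le_abs_self _).trans h2)
      rw [pow_two] at h3
      nlinarith [mul_pos hnorm hnorm, mul_pos hα (mul_pos hnorm hnorm)]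
    have hc : 0 < M / α := div_pos hM hα
    -- pointwise estimate
    have key : ∀ vh ∈ Vh, ‖u - uh‖ ≤ (M / α) * ‖u - (vh : V)‖ := by
      intro vh hvh
      -- Galerkin orthogonality
      have horth : a (u - uh) (vh - uh) = 0 := by
        have h1 : a u (vh - uh) = L (vh - uh) := hu _
        have h2 : a uh (vh - uh) = L (vh - uh) := hgal _ (Vh.sub_mem hvh huh)
        simp only [map_sub, LinearMap.sub_apply]
        simp only [map_sub] at h1 h2
        linarith
      have heq : a (u - uh) (u - uh) = a (u - uh) (u - vh) := by
        have hd : u - uh = (u - vh) + (vh - uh) := by abel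
        calc a (u - uh) (u - uh) = a (u - uh) ((u - vh) + (vh - uh)) := by rw [← hd]
          _ = a (u - uh) (u - vh) + a (u - uh) (vh - uh) := map_add _ _ _
          _ = a (u - uh) (u - vh) := by rw [horth, add_zero]
      have h1 : α * ‖u - uh‖ ^ 2 ≤ M * ‖u - uh‖ * ‖u - vh‖ := by
        calc α * ‖u - uh‖ ^ 2 ≤ a (u - uh) (u - uh) := hcoercive _
          _ = a (u - uh) (u - vh) := heq
          _ ≤ M * ‖u - uh‖ * ‖u - vh‖ := (le_abs_self _).trans (hbdd _ _)
      have h2 : α * ‖u - uh‖ ≤ M * ‖u - vh‖ := by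
        have := mul_le_mul_of_nonneg_right (le_refl (1 / ‖u - uh‖)) (le_of_lt hnorm)
        nlinarith
      rw [div_mul_eq_mul_div, le_div_iff₀ hα]
      nlinarith
    rw [mul_comm, ← div_le_iff₀ hc]
    refine le_ciInf fun vh => ?_
    rw [div_le_iff₀ hc, mul_comm]
    exact key vh vh.2
end

section
/- For the Delaunay edge-flip criterion: given a convex quadrilateral ABCD triangulated by the diagonal AC into triangles ABC and ACD, the point D lies strictly inside the circumcircle of triangle ABC if and only if the point B lies strictly inside the circumcircle of triangle ACD. -/
noncomputable section

open scoped RealInnerProductSpace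

/-- The plane. -/
abbrev Plane := EuclideanSpace ℝ (Fin 2)

/-- The circumcenter of the nondegenerate triangle `A B C`. -/
def circumcenter3 (A B C : Plane) (h : AffineIndependent ℝ ![A, B, C]) : Plane :=
  (⟨![A, B, C], h⟩ : Affine.Simplex ℝ Plane 2).circumcenter

/-- The circumradius of the nondegenerate triangle `A B C`. -/
def circumradius3 (A B C : Plane) (h : AffineIndependent ℝ ![A, B, C]) : ℝ :=
  (⟨![A, B, C], h⟩ : Affine.Simplex ℝ Plane 2).circumradius

/-- `D` lies strictly inside the circumcircle of the triangle `A B C`. -/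
def StrictlyInsideCircumcircle (D A B C : Plane)
    (h : AffineIndependent ℝ ![A, B, C]) : Prop :=
  dist D (circumcenter3 A B C h) < circumradius3 A B C h

/-- Symmetry of the Delaunay in-circle test: for a convex quadrilateral `ABCD`
(its diagonals `AC` and `BD` cross, and no three of the points are collinear),
`D` lies strictly inside the circumcircle of `ABC` iff `B` lies strictly inside
the circumcircle of `ACD`. -/
theorem incircle_test_symm (A B C D : Plane)
    (hABC : AffineIndependent ℝ ![A, B, C])
    (hACD : AffineIndependent ℝ ![A, C, D])
    (hABD : AffineIndependent ℝ ![A, B, D])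
    (hBCD : AffineIndependent ℝ ![B, C, D])
    (hconv : (openSegment ℝ A C ∩ openSegment ℝ B D).Nonempty) :
    StrictlyInsideCircumcircle D A B C hABC ↔
      StrictlyInsideCircumcircle B A C D hACD := by
  unfold StrictlyInsideCircumcircle
  obtain ⟨P, hPAC, hPBD⟩ := hconv
  set O₁ := circumcenter3 A B C hABC with hO₁def
  set r₁ := circumradius3 A B C hABC with hr₁def
  set O₂ := circumcenter3 A C D hACD with hO₂def
  set r₂ := circumradius3 A C D hACD with hr₂def
  -- distances from vertices to centers
  have hA1 : dist A O₁ = r₁ := by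
    simpa [hO₁def, hr₁def, circumcenter3, circumradius3] using
      (⟨![A, B, C], hABC⟩ : Affine.Simplex ℝ Plane 2).dist_circumcenter_eq_circumradius 0
  have hB1 : dist B O₁ = r₁ := by
    simpa [hO₁def, hr₁def, circumcenter3, circumradius3] using
      (⟨![A, B, C], hABC⟩ : Affine.Simplex ℝ Plane 2).dist_circumcenter_eq_circumradius 1
  have hC1 : dist C O₁ = r₁ := by
    simpa [hO₁def, hr₁def, circumcenter3, circumradius3] using
      (⟨![A, B, C], hABC⟩ : Affine.Simplex ℝ Plane 2).dist_circumcenter_eq_circumradius 2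
  have hA2 : dist A O₂ = r₂ := by
    simpa [hO₂def, hr₂def, circumcenter3, circumradius3] using
      (⟨![A, C, D], hACD⟩ : Affine.Simplex ℝ Plane 2).dist_circumcenter_eq_circumradius 0
  have hC2 : dist C O₂ = r₂ := by
    simpa [hO₂def, hr₂def, circumcenter3, circumradius3] using
      (⟨![A, C, D], hACD⟩ : Affine.Simplex ℝ Plane 2).dist_circumcenter_eq_circumradius 1
  have hD2 : dist D O₂ = r₂ := by
    simpa [hO₂def, hr₂def, circumcenter3, circumradius3] using
      (⟨![A, C, D], hACD⟩ : Affine.Simplex ℝ Plane 2).dist_circumcenter_eq_circumradius 2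
  -- the difference of the power functions of the two circles
  set g : Plane → ℝ :=
    fun x => dist x O₁ ^ 2 - r₁ ^ 2 - (dist x O₂ ^ 2 - r₂ ^ 2) with hgdef
  have hkey : ∀ x : Plane,
      g x = -2 * ⟪x, O₁ - O₂⟫ + (‖O₁‖ ^ 2 - r₁ ^ 2 - ‖O₂‖ ^ 2 + r₂ ^ 2) := by
    intro x
    have h1 : dist x O₁ ^ 2 = ‖x‖ ^ 2 - 2 * ⟪x, O₁⟫ + ‖O₁‖ ^ 2 := by
      rw [dist_eq_norm]; exact norm_sub_sq_real x O₁
    have h2 : dist x O₂ ^ 2 = ‖x‖ ^ 2 - 2 * ⟪x, O₂⟫ + ‖O₂‖ ^ 2 := by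
      rw [dist_eq_norm]; exact norm_sub_sq_real x O₂
    simp only [hgdef, h1, h2, inner_sub_right]
    ring
  -- g is affine
  have haff : ∀ (a b : ℝ), a + b = 1 → ∀ X Y : Plane,
      g (a • X + b • Y) = a * g X + b * g Y := by
    intro a b hab X Y
    rw [hkey, hkey, hkey]
    rw [inner_add_left, real_inner_smul_left, real_inner_smul_left]
    have : b = 1 - a := by linarith
    subst this
    ring
  have hgA : g A = 0 := by simp [hgdef, hA1, hA2]
  have hgC : g C = 0 := by simp [hgdef, hC1, hC2]
  -- P lies on line AC, so g P = 0
  obtain ⟨a, b, ha, hb, hab, hP1⟩ := hPAC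
  obtain ⟨s, t, hs, ht, hst, hP2⟩ := hPBD
  have hgP : g P = 0 := by
    rw [← hP1, haff a b hab A C, hgA, hgC]; ring
  have hcomb : s * g B + t * g D = 0 := by
    rw [← haff s t hst B D, hP2, hgP]
  have hgD : g D = dist D O₁ ^ 2 - r₁ ^ 2 := by
    simp [hgdef, hD2]
  have hgB : g B = r₂ ^ 2 - dist B O₂ ^ 2 := by
    simp [hgdef, hB1]
  have hr₁pos : 0 ≤ r₁ := hA1 ▸ dist_nonneg
  have hr₂pos : 0 ≤ r₂ := hA2 ▸ dist_nonneg
  have hDnn : (0:ℝ) ≤ dist D O₁ := dist_nonneg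
  have hBnn : (0:ℝ) ≤ dist B O₂ := dist_nonneg
  clear_value g O₁ r₁ O₂ r₂
  clear hkey haff hgA hgC hgP hP1 hP2 hO₁def hr₁def hO₂def hr₂def hA1 hC1 hA2 hC2 hD2 hB1 hgdef hABC hACD hABD hBCD
  constructor
  · intro h
    have h1 : g D < 0 := by rw [hgD]; nlinarith
    have h2 : 0 < g B := by nlinarith
    rw [hgB] at h2
    nlinarith
  · intro h
    have h2 : 0 < g B := by rw [hgB]; nlinarith
    have h1 : g D < 0 := by nlinarith
    rw [hgD] at h1
    nlinarith

end
end

section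
/- Flipping a non-Delaunay edge strictly increases the minimum of the six angles of the two triangles in the quadrilateral: if D lies strictly inside the circumcircle of ABC for convex quadrilateral ABCD, then the minimum angle among the triangles ABD and BCD is strictly greater than the minimum angle among the triangles ABC and ACD. -/
noncomputable section

/-- The minimum interior angle of the triangle `A B C`. -/
def minAngle (A B C : Plane) : ℝ :=
  min (EuclideanGeometry.angle B A C)
    (min (EuclideanGeometry.angle A B C) (EuclideanGeometry.angle A C B))

open EuclideanGeometry AffineSubspace AffineMap Set

instance : Fact (Module.finrank ℝ Plane = 2) := ⟨finrank_euclideanSpace_fin⟩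
instance : Module.Oriented ℝ Plane (Fin 2) :=
  ⟨(EuclideanSpace.basisFun (Fin 2) ℝ).toBasis.orientation⟩

namespace DelaunayFlip

/-- Three points of a line are collinear. -/
lemma collinear3_of_mem_line {p q x y z : Plane} (hx : x ∈ line[ℝ, p, q])
    (hy : y ∈ line[ℝ, p, q]) (hz : z ∈ line[ℝ, p, q]) :
    Collinear ℝ ({x, y, z} : Set Plane) :=
  (collinear_insert_insert_insert_of_mem_affineSpan_pair hx hy hz).subset
    (by intro w hw; simp at hw ⊢; tauto)

/-- Permuting a non-collinearity hypothesis. -/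
lemma ncol_perm {a b c d e f : Plane} (h : ¬Collinear ℝ ({a, b, c} : Set Plane))
    (hsub : ({a, b, c} : Set Plane) ⊆ {d, e, f}) : ¬Collinear ℝ ({d, e, f} : Set Plane) :=
  fun hc => h (hc.subset hsub)

lemma not_mem_line {a b c : Plane} (h : ¬Collinear ℝ ({a, b, c} : Set Plane)) :
    c ∉ line[ℝ, a, b] := fun hm =>
  h ((collinear_insert_of_mem_affineSpan_pair hm).subset (by intro w hw; simp at hw ⊢; tauto))

/-- Adding angles as real angles. -/
lemma real_angle_add_eq {α β γ : ℝ} (hα0 : 0 ≤ α) (hβ0 : 0 ≤ β) (hαπ : α ≤ Real.pi)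
    (hβπ : β ≤ Real.pi) (hγ0 : 0 < γ) (hγπ : γ ≤ Real.pi)
    (h : ((α + β : ℝ) : Real.Angle) = ((γ : ℝ) : Real.Angle)) : α + β = γ := by
  rw [Real.Angle.angle_eq_iff_two_pi_dvd_sub] at h
  obtain ⟨k, hk⟩ := h
  have hπ := Real.pi_pos
  have h1 : (k : ℝ) < 1 := by nlinarith
  have h2 : (-1 : ℝ) < (k : ℝ) := by nlinarith
  have hk0 : k = 0 := by
    have : k < 1 := by exact_mod_cast h1
    have : -1 < k := by exact_mod_cast h2
    omega
  rw [hk0] at hk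
  push_cast at hk
  linarith

/-- Additivity of unoriented angles at an apex, over a point strictly between. -/
lemma angle_add_of_sbtw {p a b x : Plane} (hcol : ¬Collinear ℝ ({a, p, b} : Set Plane))
    (hx : Sbtw ℝ a x b) : ∠ a p x + ∠ x p b = ∠ a p b := by
  have hap : a ≠ p := by
    rintro rfl
    exact hcol ((collinear_pair ℝ a b).subset (by intro w hw; simp at hw ⊢; tauto))
  have hbp : b ≠ p := by
    rintro rfl
    exact hcol ((collinear_pair ℝ a b).subset (by intro w hw; simp at hw ⊢; tauto))
  have hxp : x ≠ p := by
    rintro rfl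
    exact hcol hx.wbtw.collinear
  have ho : ∡ a p x + ∡ x p b = ∡ a p b := oangle_add hap hxp hbp
  have hs1 : (∡ a p x).sign = (∡ x p b).sign := hx.oangle_sign_eq p
  have hs2 : (∡ a p x).sign = (∡ a p b).sign := hx.oangle_sign_eq_left p
  have hγpos : 0 < ∠ a p b := EuclideanGeometry.angle_pos_of_not_collinear hcol
  have hsne : (∡ a p b).sign ≠ 0 := fun h =>
    hcol (EuclideanGeometry.oangle_sign_eq_zero_iff_collinear.mp h)
  have key : ((∠ a p x + ∠ x p b : ℝ) : Real.Angle) = ((∠ a p b : ℝ) : Real.Angle) := by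
    rcases hsgn : (∡ a p b).sign with _ | _
    · exact absurd hsgn hsne
    · -- sign = neg
      have e1 := oangle_eq_neg_angle_of_sign_eq_neg_one (hs2.trans hsgn)
      have e2 := oangle_eq_neg_angle_of_sign_eq_neg_one ((hs1.symm.trans hs2).trans hsgn)
      have e3 := oangle_eq_neg_angle_of_sign_eq_neg_one hsgn
      rw [e1, e2, e3, ← neg_add] at ho
      rw [Real.Angle.coe_add]
      exact neg_injective ho
    · -- sign = pos
      have e1 := oangle_eq_angle_of_sign_eq_one (hs2.trans hsgn)
      have e2 := oangle_eq_angle_of_sign_eq_one ((hs1.symm.trans hs2).trans hsgn)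
      have e3 := oangle_eq_angle_of_sign_eq_one hsgn
      rw [e1, e2, e3] at ho
      rw [Real.Angle.coe_add]
      exact ho
  exact real_angle_add_eq (angle_nonneg _ _ _) (angle_nonneg _ _ _) (angle_le_pi _ _ _)
    (angle_le_pi _ _ _) hγpos (angle_le_pi _ _ _) key

/-- The inscribed angle theorem for unoriented angles: points on the same side of a chord
subtend equal angles. -/
lemma inscribed_eq {S : EuclideanGeometry.Sphere Plane} {a b p q : Plane} (hab : a ≠ b)
    (ha : a ∈ S) (hb : b ∈ S) (hp : p ∈ S) (hq : q ∈ S)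
    (hside : (line[ℝ, a, b]).SSameSide p q) : ∠ a p b = ∠ a q b := by
  have hpl : p ∉ line[ℝ, a, b] := hside.2.1
  have hql : q ∉ line[ℝ, a, b] := hside.2.2
  have hpa : p ≠ a := fun h => hpl (h ▸ left_mem_affineSpan_pair ℝ a b)
  have hpb : p ≠ b := fun h => hpl (h ▸ right_mem_affineSpan_pair ℝ a b)
  have hqa : q ≠ a := fun h => hql (h ▸ left_mem_affineSpan_pair ℝ a b)
  have hqb : q ≠ b := fun h => hql (h ▸ right_mem_affineSpan_pair ℝ a b)
  have h2 : (2 : ℤ) • ∡ a p b = (2 : ℤ) • ∡ a q b :=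
    EuclideanGeometry.Sphere.two_zsmul_oangle_eq ha hp hq hb hpa hpb hqa hqb
  have hsign : (∡ a q b).sign = (∡ a p b).sign :=
    hside.oangle_sign_eq (left_mem_affineSpan_pair ℝ a b) (right_mem_affineSpan_pair ℝ a b)
  have hqcol : ¬Collinear ℝ ({a, q, b} : Set Plane) := fun hc =>
    hql (hc.mem_affineSpan_of_mem_of_ne (by simp) (by simp) (by simp) hab)
  have hqs : (∡ a q b).sign ≠ 0 := fun h =>
    hqcol (EuclideanGeometry.oangle_sign_eq_zero_iff_collinear.mp h)
  rcases Real.Angle.two_zsmul_eq_iff.1 h2 with h | h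
  · rw [EuclideanGeometry.angle_eq_abs_oangle_toReal hpa.symm hpb.symm,
      EuclideanGeometry.angle_eq_abs_oangle_toReal hqa.symm hqb.symm, h]
  · exfalso
    apply hqs
    have : (∡ a p b).sign = -(∡ a q b).sign := by
      rw [h, Real.Angle.sign_add_pi]
    rw [← hsign] at this
    rcases h' : (∡ a q b).sign with _ | _ <;> rw [h'] at this <;> simp_all

/-- The midpoint of a chord is strictly inside the circle. -/
lemma midpoint_inside {O a b : Plane} {r : ℝ} (hab : a ≠ b) (ha : dist a O = r)
    (hb : dist b O = r) : dist (midpoint ℝ a b) O < r := by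
  have hxn : ‖a -ᵥ O‖ = r := by rw [← ha, dist_eq_norm_vsub Plane]
  have hyn : ‖b -ᵥ O‖ = r := by rw [← hb, dist_eq_norm_vsub Plane]
  have hm : midpoint ℝ a b -ᵥ O = (2 : ℝ)⁻¹ • ((a -ᵥ O) + (b -ᵥ O)) := by
    rw [midpoint, lineMap_apply, vadd_vsub_assoc, ← vsub_sub_vsub_cancel_right b a O,
      invOf_eq_inv]
    module
  have hd : dist (midpoint ℝ a b) O = (2 : ℝ)⁻¹ * ‖(a -ᵥ O) + (b -ᵥ O)‖ := by
    rw [dist_eq_norm_vsub Plane, hm, norm_smul]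
    norm_num
  have hle : ‖(a -ᵥ O) + (b -ᵥ O)‖ ≤ ‖a -ᵥ O‖ + ‖b -ᵥ O‖ := norm_add_le _ _
  rcases lt_or_eq_of_le hle with h | h
  · rw [hd]; rw [hxn, hyn] at h; linarith
  · exfalso
    have hsr : SameRay ℝ (a -ᵥ O) (b -ᵥ O) := by
      rw [sameRay_iff_norm_add]; exact h
    have := hsr.norm_smul_eq
    rw [hxn, hyn] at this
    rcases eq_or_lt_of_le (show (0:ℝ) ≤ r by rw [← ha]; exact dist_nonneg) with h0 | h0
    · apply hab
      have hx0 : a -ᵥ O = 0 := by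
        rw [← norm_eq_zero, hxn, ← h0]
      have hy0 : b -ᵥ O = 0 := by
        rw [← norm_eq_zero, hyn, ← h0]
      have := hx0.trans hy0.symm
      rwa [vsub_left_cancel_iff] at this
    · apply hab
      have : a -ᵥ O = b -ᵥ O := by
        have h2 := this
        exact (smul_right_injective _ (ne_of_gt h0) h2).symm
      rwa [vsub_left_cancel_iff] at this

/-- The ray from `M` through a point `Q` inside the circle crosses the circle beyond `Q`. -/
lemma exists_cross_gt {O M Q : Plane} {r : ℝ} (hMQ : M ≠ Q) (hQ : dist Q O < r) :
    ∃ t : ℝ, 1 < t ∧ dist (lineMap M Q t) O = r := by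
  have hv : (0 : ℝ) < ‖Q -ᵥ M‖ := by
    rw [norm_pos_iff, vsub_ne_zero]; exact fun h => hMQ h.symm
  set T : ℝ := max 2 ((r + ‖M -ᵥ O‖ + 1) / ‖Q -ᵥ M‖) with hT
  have hT1 : (1 : ℝ) < T := lt_of_lt_of_le one_lt_two (le_max_left _ _)
  have hfT : r ≤ dist (lineMap M Q T) O := by
    have h1 : lineMap M Q T -ᵥ O = T • (Q -ᵥ M) + (M -ᵥ O) := by
      rw [lineMap_apply, vadd_vsub_assoc]
    have h2 : ‖T • (Q -ᵥ M)‖ - ‖M -ᵥ O‖ ≤ ‖T • (Q -ᵥ M) + (M -ᵥ O)‖ := by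
      have := norm_sub_norm_le (T • (Q -ᵥ M)) (-(M -ᵥ O))
      rwa [sub_neg_eq_add, norm_neg] at this
    have h3 : ‖T • (Q -ᵥ M)‖ = T * ‖Q -ᵥ M‖ := by
      rw [norm_smul, Real.norm_eq_abs, abs_of_pos (by linarith)]
    have h4 : r + ‖M -ᵥ O‖ + 1 ≤ T * ‖Q -ᵥ M‖ := by
      rw [← div_le_iff₀ hv]
      exact le_max_right _ _
    rw [dist_eq_norm_vsub Plane, h1]
    linarith
  have hcont : Continuous fun t : ℝ => dist (lineMap M Q t) O :=
    Continuous.dist (lineMap_continuous) continuous_const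
  have hIcc : r ∈ Icc (dist (lineMap M Q (1:ℝ)) O) (dist (lineMap M Q T) O) := by
    rw [lineMap_apply_one]
    exact ⟨le_of_lt hQ, hfT⟩
  obtain ⟨t, htmem, htval⟩ :=
    intermediate_value_Icc (le_of_lt hT1) hcont.continuousOn hIcc
  have htval' : dist (lineMap M Q t) O = r := htval
  refine ⟨t, ?_, htval'⟩
  rcases eq_or_lt_of_le htmem.1 with h | h
  · exfalso; rw [← h, lineMap_apply_one] at htval'; linarith
  · exact h

/-- A segment from inside the circle to outside it crosses the circle. -/
lemma exists_cross_between {O M Q : Plane} {r : ℝ} (hM : dist M O < r) (hQ : r < dist Q O) :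
    ∃ t : ℝ, t ∈ Set.Ioo (0 : ℝ) 1 ∧ dist (lineMap M Q t) O = r := by
  have hcont : Continuous fun t : ℝ => dist (lineMap M Q t) O :=
    Continuous.dist (lineMap_continuous) continuous_const
  have hIcc : r ∈ Icc (dist (lineMap M Q (0:ℝ)) O) (dist (lineMap M Q (1:ℝ)) O) := by
    rw [lineMap_apply_zero, lineMap_apply_one]
    exact ⟨le_of_lt hM, le_of_lt hQ⟩
  obtain ⟨t, htmem, htval⟩ :=
    intermediate_value_Icc (zero_le_one) hcont.continuousOn hIcc
  have htval' : dist (lineMap M Q t) O = r := htval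
  refine ⟨t, ⟨?_, ?_⟩, htval'⟩
  · rcases eq_or_lt_of_le htmem.1 with h | h
    · exfalso; rw [← h, lineMap_apply_zero] at htval'; linarith
    · exact h
  · rcases eq_or_lt_of_le htmem.2 with h | h
    · exfalso; rw [h, lineMap_apply_one] at htval'; linarith
    · exact h

/-- The key comparison: moving the apex outward along a cevian strictly decreases the angle
subtended by the base. -/
lemma angle_lt_of_sbtw {A B M D E : Plane} (hM : Sbtw ℝ A M B) (hDE : Sbtw ℝ M D E)
    (hAE : ¬Collinear ℝ ({A, M, E} : Set Plane)) : ∠ A E B < ∠ A D B := by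
  have hAB : A ≠ B := hM.left_ne_right
  have hMD : M ≠ D := hDE.left_ne
  have hDEne : D ≠ E := hDE.ne_right
  have hMl : M ∈ line[ℝ, A, B] := hM.wbtw.mem_affineSpan
  have hcMDE : Collinear ℝ ({M, D, E} : Set Plane) := hDE.wbtw.collinear
  have hEMD : E ∈ line[ℝ, M, D] :=
    hcMDE.mem_affineSpan_of_mem_of_ne (by simp) (by simp) (by simp) hMD
  have hEl : E ∉ line[ℝ, A, B] := fun hE =>
    hAE (collinear3_of_mem_line (left_mem_affineSpan_pair ℝ A B) hMl hE)
  have hDl : D ∉ line[ℝ, A, B] := by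
    intro hD
    apply hEl
    have hle : line[ℝ, M, D] ≤ line[ℝ, A, B] :=
      affineSpan_le.2 (Set.insert_subset_iff.2 ⟨hMl, Set.singleton_subset_iff.2 hD⟩)
    exact hle hEMD
  have hDA : D ≠ A := fun h => hDl (h ▸ left_mem_affineSpan_pair ℝ A B)
  have hDB : D ≠ B := fun h => hDl (h ▸ right_mem_affineSpan_pair ℝ A B)
  have hEA : E ≠ A := fun h => hEl (h ▸ left_mem_affineSpan_pair ℝ A B)
  have hEB : E ≠ B := fun h => hEl (h ▸ right_mem_affineSpan_pair ℝ A B)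
  have hADB : ¬Collinear ℝ ({A, D, B} : Set Plane) := fun hc =>
    hDl (hc.mem_affineSpan_of_mem_of_ne (by simp) (by simp) (by simp) hAB)
  have hAEB : ¬Collinear ℝ ({A, E, B} : Set Plane) := fun hc =>
    hEl (hc.mem_affineSpan_of_mem_of_ne (by simp) (by simp) (by simp) hAB)
  have hEAD : ¬Collinear ℝ ({E, A, D} : Set Plane) := by
    intro hc
    apply hAE
    have hAl : A ∈ line[ℝ, D, E] :=
      hc.mem_affineSpan_of_mem_of_ne (by simp) (by simp) (by simp) hDEne
    have hMl' : M ∈ line[ℝ, D, E] :=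
      hcMDE.mem_affineSpan_of_mem_of_ne (by simp) (by simp) (by simp) hDEne
    exact collinear3_of_mem_line hAl hMl' (right_mem_affineSpan_pair ℝ D E)
  have add1 : ∠ A D M + ∠ M D B = ∠ A D B := angle_add_of_sbtw hADB hM
  have add2 : ∠ A E M + ∠ M E B = ∠ A E B := angle_add_of_sbtw hAEB hM
  have hMDEpi : ∠ M D E = Real.pi := hDE.angle₁₂₃_eq_pi
  have hEDMpi : ∠ E D M = Real.pi := hDE.symm.angle₁₂₃_eq_pi
  have e1 : ∠ A D M + ∠ A D E = Real.pi :=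
    EuclideanGeometry.angle_add_angle_eq_pi_of_angle_eq_pi A hMDEpi
  have e2 : ∠ B D M + ∠ B D E = Real.pi :=
    EuclideanGeometry.angle_add_angle_eq_pi_of_angle_eq_pi B hMDEpi
  have t1 : ∠ A D E + ∠ D E A + ∠ E A D = Real.pi :=
    EuclideanGeometry.angle_add_angle_add_angle_eq_pi E hDA
  have t2 : ∠ B D E + ∠ D E B + ∠ E B D = Real.pi :=
    EuclideanGeometry.angle_add_angle_add_angle_eq_pi E hDB
  have r1 : ∠ A E D = ∠ A E M := EuclideanGeometry.angle_eq_angle_of_angle_eq_pi A hEDMpi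
  have r2 : ∠ B E D = ∠ B E M := EuclideanGeometry.angle_eq_angle_of_angle_eq_pi B hEDMpi
  have hpos : 0 < ∠ E A D := EuclideanGeometry.angle_pos_of_not_collinear hEAD
  have hnn : 0 ≤ ∠ E B D := angle_nonneg _ _ _
  have c1 : ∠ D E A = ∠ A E D := angle_comm _ _ _
  have c2 : ∠ M D B = ∠ B D M := angle_comm _ _ _
  have c3 : ∠ D E B = ∠ B E D := angle_comm _ _ _
  have c4 : ∠ M E B = ∠ B E M := angle_comm _ _ _
  have c5 : ∠ A D M = ∠ A D M := rfl
  linarith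

/-- A point strictly inside a circle sees a chord under a strictly larger angle than a point
of the circle on the same side of the chord. -/
lemma angle_lt_of_inside {S : EuclideanGeometry.Sphere Plane} {A B P Q : Plane}
    (hAB : A ≠ B) (hA : A ∈ S) (hB : B ∈ S) (hP : P ∈ S)
    (hside : (line[ℝ, A, B]).SSameSide P Q) (hQ : dist Q S.center < S.radius) :
    ∠ A P B < ∠ A Q B := by
  have hMid : Sbtw ℝ A (midpoint ℝ A B) B := sbtw_midpoint_of_ne ℝ hAB
  set M := midpoint ℝ A B with hMdef
  have hMl : M ∈ line[ℝ, A, B] := hMid.wbtw.mem_affineSpan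
  have hQl : Q ∉ line[ℝ, A, B] := hside.2.2
  have hMQ : M ≠ Q := fun h => hQl (h ▸ hMl)
  obtain ⟨t, ht1, htr⟩ := exists_cross_gt hMQ hQ
  set E := lineMap M Q t with hEdef
  have hES : E ∈ S := EuclideanGeometry.mem_sphere.mpr htr
  have hQE : (line[ℝ, A, B]).SSameSide Q E :=
    (sSameSide_lineMap_left hMl hQl (by linarith)).symm
  have hPE : (line[ℝ, A, B]).SSameSide P E := hside.trans hQE
  have hEl : E ∉ line[ℝ, A, B] := hQE.2.2
  have hME : M ≠ E := fun h => hEl (h ▸ hMl)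
  have ht0 : t ≠ 0 := by positivity
  have hQeq : Q = lineMap M E t⁻¹ := by
    rw [hEdef, lineMap_apply, lineMap_apply, vadd_vsub, smul_smul, inv_mul_cancel₀ ht0,
      one_smul, vsub_vadd]
  have hSb : Sbtw ℝ M Q E := by
    rw [hQeq]
    rw [sbtw_lineMap_iff]
    constructor
    · exact hME
    · constructor
      · positivity
      · rw [inv_lt_one_iff₀]; right; exact ht1
  have hAME : ¬Collinear ℝ ({A, M, E} : Set Plane) := by
    intro hc
    apply hEl
    have hAM : A ≠ M := hMid.left_ne
    have hEline : E ∈ line[ℝ, A, M] :=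
      hc.mem_affineSpan_of_mem_of_ne (by simp) (by simp) (by simp) hAM
    have hle : line[ℝ, A, M] ≤ line[ℝ, A, B] :=
      affineSpan_le.2 (Set.insert_subset_iff.2 ⟨left_mem_affineSpan_pair ℝ A B,
        Set.singleton_subset_iff.2 hMl⟩)
    exact hle hEline
  have hKey : ∠ A E B < ∠ A Q B := angle_lt_of_sbtw hMid hSb hAME
  have hIns : ∠ A P B = ∠ A E B := inscribed_eq hAB hA hB hP hES hPE
  linarith

/-- A point strictly outside a circle sees a chord under a strictly smaller angle than a point
of the circle on the same side of the chord. -/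
lemma angle_lt_of_outside {S : EuclideanGeometry.Sphere Plane} {A B P Q : Plane}
    (hAB : A ≠ B) (hA : A ∈ S) (hB : B ∈ S) (hP : P ∈ S)
    (hside : (line[ℝ, A, B]).SSameSide P Q) (hQ : S.radius < dist Q S.center) :
    ∠ A Q B < ∠ A P B := by
  have hMid : Sbtw ℝ A (midpoint ℝ A B) B := sbtw_midpoint_of_ne ℝ hAB
  set M := midpoint ℝ A B with hMdef
  have hMl : M ∈ line[ℝ, A, B] := hMid.wbtw.mem_affineSpan
  have hQl : Q ∉ line[ℝ, A, B] := hside.2.2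
  have hMQ : M ≠ Q := fun h => hQl (h ▸ hMl)
  have hMin : dist M S.center < S.radius :=
    midpoint_inside hAB (EuclideanGeometry.mem_sphere.mp hA)
      (EuclideanGeometry.mem_sphere.mp hB)
  obtain ⟨t, ht, htr⟩ := exists_cross_between hMin hQ
  set E := lineMap M Q t with hEdef
  have hES : E ∈ S := EuclideanGeometry.mem_sphere.mpr htr
  have hQE : (line[ℝ, A, B]).SSameSide Q E :=
    (sSameSide_lineMap_left hMl hQl ht.1).symm
  have hPE : (line[ℝ, A, B]).SSameSide P E := hside.trans hQE
  have hSb : Sbtw ℝ M E Q := by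
    rw [hEdef, sbtw_lineMap_iff]
    exact ⟨hMQ, ht⟩
  have hAMQ : ¬Collinear ℝ ({A, M, Q} : Set Plane) := by
    intro hc
    apply hQl
    have hAM : A ≠ M := hMid.left_ne
    have hQline : Q ∈ line[ℝ, A, M] :=
      hc.mem_affineSpan_of_mem_of_ne (by simp) (by simp) (by simp) hAM
    have hle : line[ℝ, A, M] ≤ line[ℝ, A, B] :=
      affineSpan_le.2 (Set.insert_subset_iff.2 ⟨left_mem_affineSpan_pair ℝ A B,
        Set.singleton_subset_iff.2 hMl⟩)
    exact hle hQline
  have hKey : ∠ A Q B < ∠ A E B := angle_lt_of_sbtw hMid hSb hAMQ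
  have hIns : ∠ A P B = ∠ A E B := inscribed_eq hAB hA hB hP hES hPE
  linarith

end DelaunayFlip

set_option maxHeartbeats 2000000 in
/-- Flipping a non-Delaunay edge strictly increases the minimum of the six
angles of the two triangles in the quadrilateral: if, for the strictly convex
quadrilateral `ABCD` (diagonals cross, no three points collinear), `D` lies
strictly inside the circumcircle of `ABC`, then the minimum angle among the
triangles `ABD` and `BCD` is strictly greater than the minimum angle among the
triangles `ABC` and `ACD`. -/
theorem flip_increases_min_angle (A B C D : Plane)
    (hABC : AffineIndependent ℝ ![A, B, C])
    (hACD : AffineIndependent ℝ ![A, C, D])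
    (hABD : AffineIndependent ℝ ![A, B, D])
    (hBCD : AffineIndependent ℝ ![B, C, D])
    (hconv : (openSegment ℝ A C ∩ openSegment ℝ B D).Nonempty)
    (hin : StrictlyInsideCircumcircle D A B C hABC) :
    min (minAngle A B C) (minAngle A C D) <
      min (minAngle A B D) (minAngle B C D) := by
  classical
  open DelaunayFlip in
  have nABC : ¬Collinear ℝ ({A, B, C} : Set Plane) := affineIndependent_iff_not_collinear_set.mp hABC
  have nACD : ¬Collinear ℝ ({A, C, D} : Set Plane) := affineIndependent_iff_not_collinear_set.mp hACD
  have nABD : ¬Collinear ℝ ({A, B, D} : Set Plane) := affineIndependent_iff_not_collinear_set.mp hABD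
  have nBCD : ¬Collinear ℝ ({B, C, D} : Set Plane) := affineIndependent_iff_not_collinear_set.mp hBCD
  have hAB : A ≠ B := by
    rintro rfl; exact nABC ((collinear_pair ℝ A C).subset (by intro w hw; simp at hw ⊢; tauto))
  have hBC : B ≠ C := by
    rintro rfl; exact nABC ((collinear_pair ℝ A B).subset (by intro w hw; simp at hw ⊢; tauto))
  have hAC : A ≠ C := by
    rintro rfl; exact nABC ((collinear_pair ℝ A B).subset (by intro w hw; simp at hw ⊢; tauto))
  have hCD : C ≠ D := by
    rintro rfl; exact nACD ((collinear_pair ℝ A C).subset (by intro w hw; simp at hw ⊢; tauto))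
  have hAD : A ≠ D := by
    rintro rfl; exact nACD ((collinear_pair ℝ A C).subset (by intro w hw; simp at hw ⊢; tauto))
  have hBD : B ≠ D := by
    rintro rfl; exact nABD ((collinear_pair ℝ A B).subset (by intro w hw; simp at hw ⊢; tauto))
  -- non-membership of vertices on the various lines
  have hC_AB : C ∉ line[ℝ, A, B] := DelaunayFlip.not_mem_line nABC
  have hD_AB : D ∉ line[ℝ, A, B] := DelaunayFlip.not_mem_line nABD
  have hA_BC : A ∉ line[ℝ, B, C] :=
    DelaunayFlip.not_mem_line (DelaunayFlip.ncol_perm nABC (by intro w hw; simp at hw ⊢; tauto))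
  have hD_BC : D ∉ line[ℝ, B, C] := DelaunayFlip.not_mem_line nBCD
  have hB_AD : B ∉ line[ℝ, A, D] :=
    DelaunayFlip.not_mem_line (DelaunayFlip.ncol_perm nABD (by intro w hw; simp at hw ⊢; tauto))
  have hC_AD : C ∉ line[ℝ, A, D] :=
    DelaunayFlip.not_mem_line (DelaunayFlip.ncol_perm nACD (by intro w hw; simp at hw ⊢; tauto))
  have hA_CD : A ∉ line[ℝ, C, D] :=
    DelaunayFlip.not_mem_line (DelaunayFlip.ncol_perm nACD (by intro w hw; simp at hw ⊢; tauto))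
  have hB_CD : B ∉ line[ℝ, C, D] :=
    DelaunayFlip.not_mem_line (DelaunayFlip.ncol_perm nBCD (by intro w hw; simp at hw ⊢; tauto))
  -- the crossing point of the diagonals
  obtain ⟨X, hX1, hX2⟩ := hconv
  rw [openSegment_eq_image_lineMap] at hX1 hX2
  obtain ⟨s, hs, hsX⟩ := hX1
  obtain ⟨u, hu, huX⟩ := hX2
  -- same-side facts
  have sCD_AB : (line[ℝ, A, B]).SSameSide C D := by
    have h1 : (line[ℝ, A, B]).SSameSide X C := by
      rw [← hsX]
      exact sSameSide_lineMap_left (left_mem_affineSpan_pair ℝ A B) hC_AB hs.1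
    have h2 : (line[ℝ, A, B]).SSameSide X D := by
      rw [← huX]
      exact sSameSide_lineMap_left (right_mem_affineSpan_pair ℝ A B) hD_AB hu.1
    exact h1.symm.trans h2
  have sAD_BC : (line[ℝ, B, C]).SSameSide A D := by
    have h1 : (line[ℝ, B, C]).SSameSide (lineMap C A (1 - s)) A :=
      sSameSide_lineMap_left (right_mem_affineSpan_pair ℝ B C) hA_BC (by linarith [hs.2])
    rw [lineMap_apply_one_sub, hsX] at h1
    have h2 : (line[ℝ, B, C]).SSameSide X D := by
      rw [← huX]
      exact sSameSide_lineMap_left (left_mem_affineSpan_pair ℝ B C) hD_BC hu.1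
    exact h1.symm.trans h2
  have sBC_AD : (line[ℝ, A, D]).SSameSide B C := by
    have h1 : (line[ℝ, A, D]).SSameSide (lineMap D B (1 - u)) B :=
      sSameSide_lineMap_left (right_mem_affineSpan_pair ℝ A D) hB_AD (by linarith [hu.2])
    rw [lineMap_apply_one_sub, huX] at h1
    have h2 : (line[ℝ, A, D]).SSameSide X C := by
      rw [← hsX]
      exact sSameSide_lineMap_left (left_mem_affineSpan_pair ℝ A D) hC_AD hs.1
    exact h1.symm.trans h2
  have sAB_CD : (line[ℝ, C, D]).SSameSide A B := by
    have h1 : (line[ℝ, C, D]).SSameSide (lineMap C A (1 - s)) A :=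
      sSameSide_lineMap_left (left_mem_affineSpan_pair ℝ C D) hA_CD (by linarith [hs.2])
    rw [lineMap_apply_one_sub, hsX] at h1
    have h2 : (line[ℝ, C, D]).SSameSide (lineMap D B (1 - u)) B :=
      sSameSide_lineMap_left (right_mem_affineSpan_pair ℝ C D) hB_CD (by linarith [hu.2])
    rw [lineMap_apply_one_sub, huX] at h2
    exact h1.symm.trans h2
  -- circumspheres
  have hA1 : A ∈ (⟨![A, B, C], hABC⟩ : Affine.Simplex ℝ Plane 2).circumsphere :=
    (⟨![A, B, C], hABC⟩ : Affine.Simplex ℝ Plane 2).mem_circumsphere 0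
  have hB1 : B ∈ (⟨![A, B, C], hABC⟩ : Affine.Simplex ℝ Plane 2).circumsphere :=
    (⟨![A, B, C], hABC⟩ : Affine.Simplex ℝ Plane 2).mem_circumsphere 1
  have hC1 : C ∈ (⟨![A, B, C], hABC⟩ : Affine.Simplex ℝ Plane 2).circumsphere :=
    (⟨![A, B, C], hABC⟩ : Affine.Simplex ℝ Plane 2).mem_circumsphere 2
  have hin' : dist D (⟨![A, B, C], hABC⟩ : Affine.Simplex ℝ Plane 2).circumsphere.center <
      (⟨![A, B, C], hABC⟩ : Affine.Simplex ℝ Plane 2).circumsphere.radius := hin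
  have App1 : ∠ A C B < ∠ A D B :=
    DelaunayFlip.angle_lt_of_inside hAB hA1 hB1 hC1 sCD_AB hin'
  have App2 : ∠ B A C < ∠ B D C :=
    DelaunayFlip.angle_lt_of_inside hBC hB1 hC1 hA1 sAD_BC hin'
  -- the circumsphere of A B D
  have hA2 : A ∈ (⟨![A, B, D], hABD⟩ : Affine.Simplex ℝ Plane 2).circumsphere :=
    (⟨![A, B, D], hABD⟩ : Affine.Simplex ℝ Plane 2).mem_circumsphere 0
  have hB2 : B ∈ (⟨![A, B, D], hABD⟩ : Affine.Simplex ℝ Plane 2).circumsphere :=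
    (⟨![A, B, D], hABD⟩ : Affine.Simplex ℝ Plane 2).mem_circumsphere 1
  have hD2 : D ∈ (⟨![A, B, D], hABD⟩ : Affine.Simplex ℝ Plane 2).circumsphere :=
    (⟨![A, B, D], hABD⟩ : Affine.Simplex ℝ Plane 2).mem_circumsphere 2
  have hCout : (⟨![A, B, D], hABD⟩ : Affine.Simplex ℝ Plane 2).circumsphere.radius <
      dist C (⟨![A, B, D], hABD⟩ : Affine.Simplex ℝ Plane 2).circumsphere.center := by
    rcases lt_trichotomy
      (dist C (⟨![A, B, D], hABD⟩ : Affine.Simplex ℝ Plane 2).circumsphere.center)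
      (⟨![A, B, D], hABD⟩ : Affine.Simplex ℝ Plane 2).circumsphere.radius with h | h | h
    · exfalso
      have := DelaunayFlip.angle_lt_of_inside hAB hA2 hB2 hD2 sCD_AB.symm h
      linarith
    · exfalso
      have hC2 : C ∈ (⟨![A, B, D], hABD⟩ : Affine.Simplex ℝ Plane 2).circumsphere :=
        EuclideanGeometry.mem_sphere.mpr h
      have := DelaunayFlip.inscribed_eq hAB hA2 hB2 hD2 hC2 sCD_AB.symm
      linarith
    · exact h
  have App3 : ∠ A C D < ∠ A B D :=
    DelaunayFlip.angle_lt_of_outside hAD hA2 hD2 hB2 sBC_AD hCout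
  -- the circumsphere of B C D
  have hB3 : B ∈ (⟨![B, C, D], hBCD⟩ : Affine.Simplex ℝ Plane 2).circumsphere :=
    (⟨![B, C, D], hBCD⟩ : Affine.Simplex ℝ Plane 2).mem_circumsphere 0
  have hC3 : C ∈ (⟨![B, C, D], hBCD⟩ : Affine.Simplex ℝ Plane 2).circumsphere :=
    (⟨![B, C, D], hBCD⟩ : Affine.Simplex ℝ Plane 2).mem_circumsphere 1
  have hD3 : D ∈ (⟨![B, C, D], hBCD⟩ : Affine.Simplex ℝ Plane 2).circumsphere :=
    (⟨![B, C, D], hBCD⟩ : Affine.Simplex ℝ Plane 2).mem_circumsphere 2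
  have hAout : (⟨![B, C, D], hBCD⟩ : Affine.Simplex ℝ Plane 2).circumsphere.radius <
      dist A (⟨![B, C, D], hBCD⟩ : Affine.Simplex ℝ Plane 2).circumsphere.center := by
    rcases lt_trichotomy
      (dist A (⟨![B, C, D], hBCD⟩ : Affine.Simplex ℝ Plane 2).circumsphere.center)
      (⟨![B, C, D], hBCD⟩ : Affine.Simplex ℝ Plane 2).circumsphere.radius with h | h | h
    · exfalso
      have := DelaunayFlip.angle_lt_of_inside hBC hB3 hC3 hD3 sAD_BC.symm h
      linarith
    · exfalso
      have hA3 : A ∈ (⟨![B, C, D], hBCD⟩ : Affine.Simplex ℝ Plane 2).circumsphere :=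
        EuclideanGeometry.mem_sphere.mpr h
      have := DelaunayFlip.inscribed_eq hBC hB3 hC3 hD3 hA3 sAD_BC.symm
      linarith
    · exact h
  have App4 : ∠ C A D < ∠ C B D :=
    DelaunayFlip.angle_lt_of_outside hCD hC3 hD3 hB3 sAB_CD.symm hAout
  -- additivity of the angles at A and C
  have hSbtwAXC : Sbtw ℝ A X C := by
    have := sbtw_lineMap_iff.mpr ⟨hAC, hs⟩
    rwa [hsX] at this
  have hSbtwBXD : Sbtw ℝ B X D := by
    have := sbtw_lineMap_iff.mpr ⟨hBD, hu⟩
    rwa [huX] at this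
  have hadd1 : ∠ B A X + ∠ X A D = ∠ B A D :=
    DelaunayFlip.angle_add_of_sbtw
      (DelaunayFlip.ncol_perm nABD (by intro w hw; simp at hw ⊢; tauto)) hSbtwBXD
  have hBAX : ∠ B A X = ∠ B A C :=
    EuclideanGeometry.angle_eq_angle_of_angle_eq_pi B hSbtwAXC.angle₁₂₃_eq_pi
  have hXAD : ∠ X A D = ∠ C A D := by
    have h := EuclideanGeometry.angle_eq_angle_of_angle_eq_pi D hSbtwAXC.angle₁₂₃_eq_pi
    rw [EuclideanGeometry.angle_comm X A D, EuclideanGeometry.angle_comm C A D]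
    exact h
  have hadd2 : ∠ B C X + ∠ X C D = ∠ B C D :=
    DelaunayFlip.angle_add_of_sbtw nBCD hSbtwBXD
  have hBCX : ∠ B C X = ∠ B C A :=
    EuclideanGeometry.angle_eq_angle_of_angle_eq_pi B hSbtwAXC.symm.angle₁₂₃_eq_pi
  have hXCD : ∠ X C D = ∠ A C D := by
    have h := EuclideanGeometry.angle_eq_angle_of_angle_eq_pi D hSbtwAXC.symm.angle₁₂₃_eq_pi
    rw [EuclideanGeometry.angle_comm X C D, EuclideanGeometry.angle_comm A C D]
    exact h
  have pCAD : 0 < ∠ C A D :=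
    EuclideanGeometry.angle_pos_of_not_collinear
      (DelaunayFlip.ncol_perm nACD (by intro w hw; simp at hw ⊢; tauto))
  have pBCA : 0 < ∠ B C A :=
    EuclideanGeometry.angle_pos_of_not_collinear
      (DelaunayFlip.ncol_perm nABC (by intro w hw; simp at hw ⊢; tauto))
  have cACD : ∠ B C A = ∠ A C B := EuclideanGeometry.angle_comm B C A
  -- the six strict inequalities
  have g1 : ∠ B A C < ∠ B A D := by linarith
  have g2 : ∠ A C D < ∠ A B D := App3
  have g3 : ∠ A C B < ∠ A D B := App1
  have g4 : ∠ C A D < ∠ C B D := App4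
  have g5 : ∠ A C D < ∠ B C D := by linarith
  have g6 : ∠ B A C < ∠ B D C := App2
  -- assembling the minimum
  have l1 : min (minAngle A B C) (minAngle A C D) ≤ ∠ B A C :=
    le_trans (min_le_left _ _) (min_le_left _ _)
  have l2 : min (minAngle A B C) (minAngle A C D) ≤ ∠ A C B :=
    le_trans (min_le_left _ _) (le_trans (min_le_right _ _) (min_le_right _ _))
  have l3 : min (minAngle A B C) (minAngle A C D) ≤ ∠ C A D :=
    le_trans (min_le_right _ _) (min_le_left _ _)
  have l4 : min (minAngle A B C) (minAngle A C D) ≤ ∠ A C D :=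
    le_trans (min_le_right _ _) (le_trans (min_le_right _ _) (min_le_left _ _))
  rw [show minAngle A B D = min (∠ B A D) (min (∠ A B D) (∠ A D B)) from rfl,
    show minAngle B C D = min (∠ C B D) (min (∠ B C D) (∠ B D C)) from rfl]
  simp only [lt_min_iff]
  exact ⟨⟨lt_of_le_of_lt l1 g1, lt_of_le_of_lt l4 g2, lt_of_le_of_lt l2 g3⟩,
    lt_of_le_of_lt l3 g4, lt_of_le_of_lt l4 g5, lt_of_le_of_lt l1 g6⟩

end
end
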